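/- arXiv:1809.03475 — 8 statements merged into one kernel-verified Lean document; each statement's English description precedes it below -/
import Mathlib

section
/- For every integer d ≥ 2 and every pair of orthonormal bases of ℂ^d with overlap matrix U, the random-access-code exclusion and independence satisfy the uncertainty relation E(U) ≥ Ind(U)²/(4d). -/
/-- Modulus of the overlap `⟨e i, f j⟩` of two orthonormal bases of `ℂ^d`. -/
noncomputable def racOverlap (d : ℕ)
    (e f : OrthonormalBasis (Fin d) ℂ (EuclideanSpace ℂ (Fin d))) (i j : Fin d) : ℝ :=
  ‖(inner ℂ (e i) (f j) : ℂ)‖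

/-- Random-access-code independence `Ind(U) = (1/(d-1))·((1/d)·Σ_{i,j} |U_{ij}| − 1)`. -/
noncomputable def racInd (d : ℕ)
    (e f : OrthonormalBasis (Fin d) ℂ (EuclideanSpace ℂ (Fin d))) : ℝ :=
  (1 / ((d : ℝ) - 1)) * ((1 / (d : ℝ)) * (∑ i, ∑ j, racOverlap d e f i j) - 1)

/-- Random-access-code exclusion
`E(U) = (1/2)·(1 − (1/d)·max_π Σ_i |U_{i,π(i)}|)`. -/
noncomputable def racExc (d : ℕ)
    (e f : OrthonormalBasis (Fin d) ℂ (EuclideanSpace ℂ (Fin d))) : ℝ :=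
  (1 / 2) * (1 - (1 / (d : ℝ)) *
    Finset.univ.sup' ⟨1, Finset.mem_univ 1⟩
      (fun π : Equiv.Perm (Fin d) => ∑ i, racOverlap d e f i (π i)))

/-- For every `d ≥ 2` and every pair of orthonormal bases of `ℂ^d`, the
random-access-code exclusion and independence satisfy `E ≥ Ind²/(4d)`. -/
theorem rac_exclusion_uncertainty_relation (d : ℕ) (hd : 2 ≤ d)
    (e f : OrthonormalBasis (Fin d) ℂ (EuclideanSpace ℂ (Fin d))) :
    racExc d e f ≥ (racInd d e f) ^ 2 / (4 * (d : ℝ)) := by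
  classical
  have hd2 : (2:ℝ) ≤ (d:ℝ) := by exact_mod_cast hd
  have hd0 : (0:ℝ) < d := by linarith
  have hd1 : (1:ℝ) ≤ (d:ℝ) - 1 := by linarith
  rw [racExc, racInd]
  set a : Fin d → Fin d → ℝ := racOverlap d e f with ha
  have hnn : ∀ i j, 0 ≤ a i j := by
    intro i j; rw [ha]; exact norm_nonneg (inner ℂ (e i) (f j) : ℂ)
  -- Parseval: each row of |U| has squared sum 1
  have hrow : ∀ i, ∑ j, (a i j)^2 = 1 := by
    intro i
    have hterm : ∀ j, (inner ℂ (e i) (f j) : ℂ) * (inner ℂ (f j) (e i) : ℂ)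
        = ((a i j : ℝ) : ℂ)^2 := by
      intro j
      have h1 : (inner ℂ (f j) (e i) : ℂ) = starRingEnd ℂ (inner ℂ (e i) (f j) : ℂ) :=
        (inner_conj_symm (f j) (e i)).symm
      rw [h1, Complex.mul_conj, Complex.normSq_eq_norm_sq, ha]
      push_cast
      norm_num [racOverlap]
    have hsum := f.sum_inner_mul_inner (e i) (e i)
    have hself : (inner ℂ (e i) (e i) : ℂ) = 1 := by
      have h1 := e.orthonormal
      rw [orthonormal_iff_ite] at h1
      simpa using h1 i i
    have key : ((∑ j, (a i j)^2 : ℝ) : ℂ) = 1 := by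
      push_cast
      rw [← hself, ← hsum]
      exact (Finset.sum_congr rfl fun j _ => (hterm j)).symm
    exact_mod_cast key
  have hle1 : ∀ i j, a i j ≤ 1 := by
    intro i j
    have h1 : (a i j)^2 ≤ ∑ k, (a i k)^2 :=
      Finset.single_le_sum (fun k _ => sq_nonneg (a i k)) (Finset.mem_univ j)
    rw [hrow i] at h1
    nlinarith [hnn i j]
  -- extract the maximizing permutation
  obtain ⟨π, -, hπ⟩ := Finset.exists_mem_eq_sup'
    (⟨1, Finset.mem_univ 1⟩ : (Finset.univ : Finset (Equiv.Perm (Fin d))).Nonempty)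
    (fun π : Equiv.Perm (Fin d) => ∑ i, a i (π i))
  rw [hπ]
  set M : ℝ := ∑ i, a i (π i) with hM
  set S : ℝ := ∑ i, ∑ j, a i j with hS
  have hMd : M ≤ (d : ℝ) := by
    rw [hM]
    calc ∑ i, a i (π i) ≤ ∑ _i : Fin d, (1:ℝ) :=
          Finset.sum_le_sum (fun i _ => hle1 i (π i))
      _ = d := by simp
  have hSd : (d : ℝ) ≤ S := by
    rw [hS]
    have : ∀ i : Fin d, (1:ℝ) ≤ ∑ j, a i j := by
      intro i
      rw [← hrow i]
      exact Finset.sum_le_sum fun j _ => by nlinarith [hnn i j, hle1 i j]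
    calc (d:ℝ) = ∑ _i : Fin d, (1:ℝ) := by simp
      _ ≤ ∑ i, ∑ j, a i j := Finset.sum_le_sum fun i _ => this i
  -- per-row Cauchy-Schwarz bound
  have hrowbound : ∀ i, ∑ j, a i j
      ≤ a i (π i) + Real.sqrt (2*((d:ℝ)-1)) * Real.sqrt (1 - a i (π i)) := by
    intro i
    have hsplit : ∑ j, a i j
        = (∑ j ∈ Finset.univ.erase (π i), a i j) + a i (π i) :=
      (Finset.sum_erase_add _ _ (Finset.mem_univ (π i))).symm
    have hcard : (((Finset.univ.erase (π i)).card : ℕ) : ℝ) = (d:ℝ) - 1 := by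
      rw [Finset.card_erase_of_mem (Finset.mem_univ _), Finset.card_univ, Fintype.card_fin,
        Nat.cast_sub (le_trans one_le_two hd)]
      simp
    have herase_sq : ∑ j ∈ Finset.univ.erase (π i), (a i j)^2 = 1 - (a i (π i))^2 := by
      have h1 : (∑ j ∈ Finset.univ.erase (π i), (a i j)^2) + (a i (π i))^2
          = ∑ j, (a i j)^2 :=
        Finset.sum_erase_add Finset.univ (fun j => (a i j)^2) (Finset.mem_univ (π i))
      have h2 := hrow i
      linarith
    have hCS : (∑ j ∈ Finset.univ.erase (π i), a i j)^2
        ≤ ((d:ℝ)-1) * (1 - (a i (π i))^2) := by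
      have h1 := sq_sum_le_card_mul_sum_sq (s := Finset.univ.erase (π i))
        (f := fun j => a i j)
      rw [herase_sq] at h1
      rw [← hcard]
      exact h1
    have hb := hle1 i (π i)
    have hbnn := hnn i (π i)
    have h2 : (∑ j ∈ Finset.univ.erase (π i), a i j)^2
        ≤ 2*((d:ℝ)-1) * (1 - a i (π i)) := by nlinarith
    have h3 : ∑ j ∈ Finset.univ.erase (π i), a i j
        ≤ Real.sqrt (2*((d:ℝ)-1) * (1 - a i (π i))) := by
      have h4 := Real.sqrt_le_sqrt h2
      rwa [Real.sqrt_sq (Finset.sum_nonneg fun j _ => hnn i j)] at h4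
    have h5 : Real.sqrt (2*((d:ℝ)-1) * (1 - a i (π i)))
        = Real.sqrt (2*((d:ℝ)-1)) * Real.sqrt (1 - a i (π i)) :=
      Real.sqrt_mul (by linarith) _
    rw [h5] at h3
    linarith
  -- sum over rows, Cauchy-Schwarz again
  have hsqS : ∑ i, Real.sqrt (1 - a i (π i)) ≤ Real.sqrt ((d:ℝ) * ((d:ℝ) - M)) := by
    have h1 := sq_sum_le_card_mul_sum_sq (s := (Finset.univ : Finset (Fin d)))
      (f := fun i => Real.sqrt (1 - a i (π i)))
    have h2 : ∑ i, (Real.sqrt (1 - a i (π i)))^2 = (d:ℝ) - M := by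
      have h3 : ∀ i : Fin d, (Real.sqrt (1 - a i (π i)))^2 = 1 - a i (π i) := by
        intro i; exact Real.sq_sqrt (by linarith [hle1 i (π i)])
      rw [Finset.sum_congr rfl fun i _ => h3 i, Finset.sum_sub_distrib, ← hM]
      simp
    rw [h2, Finset.card_univ, Fintype.card_fin] at h1
    have h4 := Real.sqrt_le_sqrt h1
    rwa [Real.sqrt_sq (Finset.sum_nonneg fun i _ => Real.sqrt_nonneg _)] at h4
  set X : ℝ := Real.sqrt (2*((d:ℝ)-1)) * Real.sqrt ((d:ℝ) * ((d:ℝ) - M)) with hX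
  have hXnn : 0 ≤ X := mul_nonneg (Real.sqrt_nonneg _) (Real.sqrt_nonneg _)
  have hSX : S ≤ (d:ℝ) + X := by
    have h1 : S ≤ M + Real.sqrt (2*((d:ℝ)-1)) * ∑ i, Real.sqrt (1 - a i (π i)) := by
      calc S ≤ ∑ i, (a i (π i) + Real.sqrt (2*((d:ℝ)-1)) * Real.sqrt (1 - a i (π i))) :=
            Finset.sum_le_sum fun i _ => hrowbound i
        _ = M + Real.sqrt (2*((d:ℝ)-1)) * ∑ i, Real.sqrt (1 - a i (π i)) := by
            rw [Finset.sum_add_distrib, ← Finset.mul_sum, hM]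
    have h2 : Real.sqrt (2*((d:ℝ)-1)) * ∑ i, Real.sqrt (1 - a i (π i)) ≤ X := by
      rw [hX]
      exact mul_le_mul_of_nonneg_left hsqS (Real.sqrt_nonneg _)
    linarith
  have hX2 : X^2 = 2*((d:ℝ)-1) * ((d:ℝ) * ((d:ℝ) - M)) := by
    rw [hX, mul_pow, Real.sq_sqrt (by linarith), Real.sq_sqrt (by nlinarith)]
  -- final algebra
  set I : ℝ := (1 / ((d:ℝ) - 1)) * ((1 / (d:ℝ)) * S - 1) with hI
  have hd1' : (0:ℝ) < (d:ℝ) - 1 := by linarith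
  have hne : (d:ℝ) * ((d:ℝ) - 1) ≠ 0 := by positivity
  have hIeq : I = (S - (d:ℝ)) / ((d:ℝ) * ((d:ℝ) - 1)) := by
    rw [hI, eq_div_iff hne]
    have h0 : (d:ℝ) ≠ 0 := ne_of_gt hd0
    have h1 : ((d:ℝ) - 1) ≠ 0 := ne_of_gt hd1'
    field_simp
  have hInn : 0 ≤ I := by
    rw [hIeq]
    apply div_nonneg (by linarith) (by positivity)
  have hIle : I ≤ X / ((d:ℝ) * ((d:ℝ) - 1)) := by
    rw [hIeq]
    gcongr
    linarith
  have hI2 : I^2 ≤ 2*((d:ℝ) - M) := by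
    have h1 : I^2 ≤ X^2 / ((d:ℝ) * ((d:ℝ) - 1))^2 := by
      have := pow_le_pow_left₀ hInn hIle 2
      rwa [div_pow] at this
    have h2 : X^2 / ((d:ℝ) * ((d:ℝ) - 1))^2 = 2*((d:ℝ) - M) / ((d:ℝ) * ((d:ℝ) - 1)) := by
      rw [hX2]; field_simp
    have h3 : 2*((d:ℝ) - M) / ((d:ℝ) * ((d:ℝ) - 1)) ≤ 2*((d:ℝ) - M) :=
      div_le_self (by linarith) (by nlinarith)
    linarith
  rw [ge_iff_le, div_le_iff₀ (by positivity)]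
  have hgoal : (1/2) * (1 - (1/(d:ℝ)) * M) * (4 * (d:ℝ)) = 2*((d:ℝ) - M) := by
    field_simp; ring
  rw [hgoal]
  exact hI2
end

section
/- For every integer d ≥ 2 and every pair of orthonormal bases of ℂ^d with overlap matrix U, there exists an index i₀ ∈ {1,…,d} such that max_j |U_{i₀ j}|² ≤ 1 − (d−1)·Ind(U)². -/
/-- For every `d ≥ 2` and every pair of orthonormal bases of `ℂ^d` with overlap
matrix `U`, there is an index `i₀` such that `max_j |U_{i₀ j}|² ≤ 1 − (d−1)·Ind(U)²`. -/
theorem exists_row_with_small_max_overlap (d : ℕ) (hd : 2 ≤ d)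
    (e f : OrthonormalBasis (Fin d) ℂ (EuclideanSpace ℂ (Fin d))) :
    ∃ i₀ : Fin d, ∀ j : Fin d,
      (racOverlap d e f i₀ j) ^ 2 ≤ 1 - ((d : ℝ) - 1) * (racInd d e f) ^ 2 := by
  set r := racOverlap d e f with hr
  have hd1 : (1 : ℝ) ≤ (d : ℝ) - 1 := by
    have : (2 : ℝ) ≤ (d : ℝ) := by exact_mod_cast hd
    linarith
  have hdpos : (0 : ℝ) < (d : ℝ) := by linarith
  have hnn : ∀ i j, 0 ≤ r i j := fun i j => norm_nonneg _
  have hle1 : ∀ i j, r i j ≤ 1 := by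
    intro i j
    have h := norm_inner_le_norm (𝕜 := ℂ) (e i) (f j)
    rwa [e.orthonormal.1 i, f.orthonormal.1 j, one_mul] at h
  have hrow : ∀ i, ∑ j, r i j ^ 2 = 1 := by
    intro i
    have h := f.sum_inner_mul_inner (e i) (e i)
    rw [inner_self_eq_norm_sq_to_K, e.orthonormal.1 i] at h
    have h2 : ∀ j, (inner ℂ (e i) (f j) : ℂ) * inner ℂ (f j) (e i) = ((r i j ^ 2 : ℝ) : ℂ) := by
      intro j
      rw [← inner_conj_symm (f j) (e i), Complex.mul_conj]
      simp [hr, racOverlap, Complex.normSq_eq_norm_sq]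
    simp_rw [h2] at h
    have := congrArg Complex.re h
    simp only [Complex.re_sum, Complex.ofReal_re] at this
    simpa using this
  have hs : ∀ i, 1 ≤ ∑ j, r i j := by
    intro i
    calc (1 : ℝ) = ∑ j, r i j ^ 2 := (hrow i).symm
      _ ≤ ∑ j, r i j := Finset.sum_le_sum fun j _ => by nlinarith [hnn i j, hle1 i j]
  set S := ∑ i, ∑ j, r i j with hS
  set a := ((d : ℝ) - 1) * racInd d e f with haDef
  have haInd : a = (1 / (d : ℝ)) * S - 1 := by
    rw [haDef, racInd, ← hr, ← hS]
    have hdne : (d : ℝ) - 1 ≠ 0 := by linarith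
    field_simp
  have hSd : (d : ℝ) ≤ S := by
    calc (d : ℝ) = ∑ _i : Fin d, (1 : ℝ) := by simp
      _ ≤ S := Finset.sum_le_sum fun i _ => hs i
  have ha0 : 0 ≤ a := by
    rw [haInd, sub_nonneg, one_div, inv_mul_eq_div, le_div_iff₀ hdpos]
    linarith
  haveI : Nonempty (Fin d) := ⟨⟨0, by omega⟩⟩
  have hex : ∃ i : Fin d, (1 / (d : ℝ)) * S ≤ ∑ j, r i j := by
    by_contra hcon
    push_neg at hcon
    have : S < ∑ _i : Fin d, (1 / (d : ℝ)) * S := by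
      calc S = ∑ i, ∑ j, r i j := hS
        _ < ∑ _i : Fin d, (1 / (d : ℝ)) * S :=
          Finset.sum_lt_sum_of_nonempty (Finset.univ_nonempty_iff.mpr inferInstance)
            fun i _ => hcon i
    rw [Finset.sum_const, Finset.card_univ, Fintype.card_fin, nsmul_eq_mul] at this
    have : S < S := by
      calc S < (d : ℝ) * ((1 / (d : ℝ)) * S) := this
        _ = S := by field_simp
    exact lt_irrefl _ this
  obtain ⟨i₀, hi₀⟩ := hex
  refine ⟨i₀, fun j => ?_⟩
  have hkey : a ≤ ∑ j' ∈ Finset.univ.erase j, r i₀ j' := by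
    have hsplit : r i₀ j + ∑ j' ∈ Finset.univ.erase j, r i₀ j' = ∑ j', r i₀ j' :=
      Finset.add_sum_erase Finset.univ (fun j' => r i₀ j') (Finset.mem_univ j)
    have := hle1 i₀ j
    rw [haInd]
    linarith
  have hcs : (∑ j' ∈ Finset.univ.erase j, r i₀ j') ^ 2
      ≤ ((d : ℝ) - 1) * ∑ j' ∈ Finset.univ.erase j, r i₀ j' ^ 2 := by
    have hc := sq_sum_le_card_mul_sum_sq (s := Finset.univ.erase j) (f := fun j' => r i₀ j')
    have hcard : ((Finset.univ.erase j).card : ℝ) = (d : ℝ) - 1 := by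
      rw [Finset.card_erase_of_mem (Finset.mem_univ j), Finset.card_univ, Fintype.card_fin]
      have : 1 ≤ d := by omega
      push_cast [Nat.cast_sub this]
      ring
    calc (∑ j' ∈ Finset.univ.erase j, r i₀ j') ^ 2
        ≤ ((Finset.univ.erase j).card : ℝ) * ∑ j' ∈ Finset.univ.erase j, r i₀ j' ^ 2 := by
          exact_mod_cast hc
      _ = ((d : ℝ) - 1) * ∑ j' ∈ Finset.univ.erase j, r i₀ j' ^ 2 := by rw [hcard]
  have herase : ∑ j' ∈ Finset.univ.erase j, r i₀ j' ^ 2 = 1 - r i₀ j ^ 2 := by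
    have hsplit : r i₀ j ^ 2 + ∑ j' ∈ Finset.univ.erase j, r i₀ j' ^ 2 = ∑ j', r i₀ j' ^ 2 :=
      Finset.add_sum_erase Finset.univ (fun j' => r i₀ j' ^ 2) (Finset.mem_univ j)
    rw [hrow i₀] at hsplit
    linarith
  have hsq : a ^ 2 ≤ ((d : ℝ) - 1) * (1 - r i₀ j ^ 2) := by
    have h1 : a ^ 2 ≤ (∑ j' ∈ Finset.univ.erase j, r i₀ j') ^ 2 :=
      pow_le_pow_left₀ ha0 hkey 2
    rw [herase] at hcs
    linarith
  have ha2 : a ^ 2 = ((d : ℝ) - 1) ^ 2 * (racInd d e f) ^ 2 := by rw [haDef]; ring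
  nlinarith [hd1, sq_nonneg (racInd d e f)]
end

section
/- Let u and v be unit vectors in ℂ^d (d ≥ 1), and let P_u and P_v denote the orthogonal projections onto the lines spanned by u and v respectively. Then the operator norm of P_u + P_v equals 1 + |⟨u, v⟩|. -/
open scoped ComplexConjugate

lemma re_conj_mul_self (z : ℂ) : ((conj z) * z).re = ‖z‖ ^ 2 := by
  rw [Complex.conj_mul']
  rw [show ((‖z‖ : ℂ) ^ 2) = ((‖z‖ ^ 2 : ℝ) : ℂ) by push_cast; ring]
  exact Complex.ofReal_re _

/-- Expansion of the inner product of `a • u + b • v` with itself. -/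
lemma inner_comb_expand {d : ℕ} (u v : EuclideanSpace ℂ (Fin d))
    (hu : ‖u‖ = 1) (hv : ‖v‖ = 1) (a b : ℂ) :
    (inner ℂ (a • u + b • v) (a • u + b • v) : ℂ)
      = conj a * a + conj b * b + (conj a * b * (inner ℂ u v : ℂ)
        + conj (conj a * b * (inner ℂ u v : ℂ))) := by
  have huu : (inner ℂ u u : ℂ) = 1 := by
    rw [inner_self_eq_norm_sq_to_K, hu]; norm_num
  have hvv : (inner ℂ v v : ℂ) = 1 := by
    rw [inner_self_eq_norm_sq_to_K, hv]; norm_num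
  have hvu : (inner ℂ v u : ℂ) = conj (inner ℂ u v : ℂ) := (inner_conj_symm v u).symm
  simp only [inner_add_left, inner_add_right, inner_smul_left, inner_smul_right,
    huu, hvv, hvu, map_mul, Complex.conj_conj]
  ring

/-- For unit vectors `u, v ∈ ℂ^d`, the operator norm of the sum of the rank-one
orthogonal projections onto the lines spanned by `u` and `v` equals `1 + |⟨u,v⟩|`. -/
theorem opNorm_add_rankOne_projections (d : ℕ) (hd : 1 ≤ d)
    (u v : EuclideanSpace ℂ (Fin d)) (hu : ‖u‖ = 1) (hv : ‖v‖ = 1) :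
    ‖(innerSL ℂ u).smulRight u + (innerSL ℂ v).smulRight v‖ =
      1 + ‖(inner ℂ u v : ℂ)‖ := by
  set c : ℂ := inner ℂ u v with hc
  set r : ℝ := ‖c‖ with hr
  have hr0 : 0 ≤ r := norm_nonneg c
  set T := (innerSL ℂ u).smulRight u + (innerSL ℂ v).smulRight v with hT
  have hTx : ∀ x, T x = (inner ℂ u x : ℂ) • u + (inner ℂ v x : ℂ) • v := by
    intro x
    simp [hT, ContinuousLinearMap.smulRight_apply]
  -- real part of the quadratic form
  have hquad : ∀ x : EuclideanSpace ℂ (Fin d),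
      (inner ℂ (T x) x : ℂ).re
        = ‖(inner ℂ u x : ℂ)‖ ^ 2 + ‖(inner ℂ v x : ℂ)‖ ^ 2 := by
    intro x
    rw [hTx]
    simp only [inner_add_left, inner_smul_left]
    rw [Complex.add_re, re_conj_mul_self, re_conj_mul_self]
  -- norm squared of T x
  have hnormsq : ∀ x : EuclideanSpace ℂ (Fin d),
      ‖T x‖ ^ 2 = ‖(inner ℂ u x : ℂ)‖ ^ 2 + ‖(inner ℂ v x : ℂ)‖ ^ 2
        + 2 * (conj (inner ℂ u x : ℂ) * (inner ℂ v x : ℂ) * c).re := by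
    intro x
    rw [← @inner_self_eq_norm_sq ℂ, hTx, inner_comb_expand u v hu hv]
    simp only [RCLike.re_to_complex, Complex.add_re, Complex.conj_re,
      re_conj_mul_self, ← hc]
    ring
  -- cross term bound
  have hcross : ∀ a b : ℂ, 2 * (conj a * b * c).re
      ≤ r * (‖a‖ ^ 2 + ‖b‖ ^ 2) := by
    intro a b
    have h1 : (conj a * b * c).re ≤ ‖a‖ * ‖b‖ * r := by
      calc (conj a * b * c).re ≤ ‖conj a * b * c‖ := Complex.re_le_norm _
        _ = ‖a‖ * ‖b‖ * r := by
            rw [norm_mul, norm_mul, Complex.norm_conj]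
    nlinarith [sq_nonneg (‖a‖ - ‖b‖), hr0,
      norm_nonneg a, norm_nonneg b]
  -- quadratic form bounded by norms
  have hq_le : ∀ x : EuclideanSpace ℂ (Fin d),
      (inner ℂ (T x) x : ℂ).re ≤ ‖T x‖ * ‖x‖ := by
    intro x
    have h := re_inner_le_norm (𝕜 := ℂ) (T x) x
    rwa [RCLike.re_to_complex] at h
  -- upper bound
  have hub : ‖T‖ ≤ 1 + r := by
    apply ContinuousLinearMap.opNorm_le_bound _ (by positivity)
    intro x
    have h1 : ‖T x‖ ^ 2 ≤ (1 + r) * (inner ℂ (T x) x : ℂ).re := by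
      rw [hnormsq x, hquad x]
      nlinarith [hcross (inner ℂ u x : ℂ) (inner ℂ v x : ℂ),
        sq_nonneg (‖(inner ℂ u x : ℂ)‖), sq_nonneg (‖(inner ℂ v x : ℂ)‖)]
    have h2 : ‖T x‖ ^ 2 ≤ (1 + r) * (‖T x‖ * ‖x‖) := by
      refine h1.trans ?_
      have h3 := hq_le x
      nlinarith [hr0]
    rcases eq_or_lt_of_le (norm_nonneg (T x)) with h | h
    · have h0 : ‖T x‖ = 0 := h.symm
      rw [h0]; positivity
    · nlinarith [norm_nonneg x, hr0]
  -- lower bound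
  have hlb : 1 + r ≤ ‖T‖ := by
    set ω : ℂ := if c = 0 then 1 else conj c / (r : ℂ) with hω
    have hωc : ω * c = ((r : ℝ) : ℂ) := by
      by_cases h : c = 0
      · have hr0' : r = 0 := by rw [hr, h, norm_zero]
        rw [h, mul_zero, hr0', Complex.ofReal_zero]
      · have hrne : (r : ℂ) ≠ 0 := by
          simp only [ne_eq, Complex.ofReal_eq_zero]
          exact fun hh => h (norm_eq_zero.mp (by rw [← hr]; exact hh))
        rw [hω, if_neg h, div_mul_eq_mul_div, mul_comm, Complex.mul_conj',
          ← hr]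
        rw [show ((r:ℂ))^2 = (r:ℂ) * (r:ℂ) by ring, mul_div_assoc, div_self hrne, mul_one]
    have hωabs : ‖ω‖ = 1 := by
      by_cases h : c = 0
      · simp [hω, h]
      · have hrne : r ≠ 0 := fun hh => h (norm_eq_zero.mp (by rw [← hr]; exact hh))
        rw [hω, if_neg h, norm_div, Complex.norm_conj, Complex.norm_real, Real.norm_eq_abs,
          abs_of_nonneg hr0, ← hr, div_self hrne]
    have hcω : conj c = ω * ((r : ℝ) : ℂ) := by
      by_cases h : c = 0
      · have hr0' : r = 0 := by rw [hr, h, norm_zero]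
        rw [h, map_zero, hr0', Complex.ofReal_zero, mul_zero]
      · have hrne : (r : ℂ) ≠ 0 := by
          simp only [ne_eq, Complex.ofReal_eq_zero]
          exact fun hh => h (norm_eq_zero.mp (by rw [← hr]; exact hh))
        rw [hω, if_neg h, div_mul_cancel₀ _ hrne]
    set x : EuclideanSpace ℂ (Fin d) := u + ω • v with hxdef
    have huu : (inner ℂ u u : ℂ) = 1 := by
      rw [inner_self_eq_norm_sq_to_K, hu]; norm_num
    have hvv : (inner ℂ v v : ℂ) = 1 := by
      rw [inner_self_eq_norm_sq_to_K, hv]; norm_num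
    have hax : (inner ℂ u x : ℂ) = 1 + ((r : ℝ) : ℂ) := by
      rw [hxdef, inner_add_right, inner_smul_right, huu, ← hc, hωc]
    have hbx : (inner ℂ v x : ℂ) = ω * (1 + ((r : ℝ) : ℂ)) := by
      have hvu : (inner ℂ v u : ℂ) = conj c := by rw [hc]; exact (inner_conj_symm v u).symm
      rw [hxdef, inner_add_right, inner_smul_right, hvv, hvu, hcω]
      ring
    have habs1r : ‖1 + ((r : ℝ) : ℂ)‖ = 1 + r := by
      rw [show (1 + ((r:ℝ):ℂ)) = (((1 + r : ℝ)) : ℂ) by push_cast; ring,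
        Complex.norm_real, Real.norm_eq_abs]
      exact abs_of_nonneg (by linarith)
    have hxnorm : ‖x‖ ^ 2 = 2 + 2 * r := by
      rw [← @inner_self_eq_norm_sq ℂ, hxdef,
        show u + ω • v = (1:ℂ) • u + ω • v by rw [one_smul],
        inner_comb_expand u v hu hv, ← hc]
      simp only [RCLike.re_to_complex, Complex.add_re, Complex.conj_re,
        re_conj_mul_self]
      have h1 : ((conj (1:ℂ)) * ω * c).re = r := by
        rw [show (conj (1:ℂ)) * ω * c = ω * c by rw [map_one, one_mul], hωc,
          Complex.ofReal_re]
      rw [h1, hωabs]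
      simp only [re_conj_mul_self, map_one, norm_one, one_pow, Complex.one_re]
      ring
    have hxpos : 0 < ‖x‖ ^ 2 := by rw [hxnorm]; linarith
    have hqval : (inner ℂ (T x) x : ℂ).re = 2 * (1 + r) ^ 2 := by
      rw [hquad x, hax, hbx, norm_mul, hωabs, habs1r]
      ring
    have hchain : (1 + r) * ‖x‖ ^ 2 ≤ ‖T‖ * ‖x‖ ^ 2 := by
      have h1 : (1 + r) * ‖x‖ ^ 2 = (inner ℂ (T x) x : ℂ).re := by
        rw [hqval, hxnorm]; ring
      have h2 : (inner ℂ (T x) x : ℂ).re ≤ ‖T x‖ * ‖x‖ := hq_le x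
      have h3 : ‖T x‖ ≤ ‖T‖ * ‖x‖ := T.le_opNorm x
      have h4 : ‖T x‖ * ‖x‖ ≤ ‖T‖ * ‖x‖ * ‖x‖ :=
        mul_le_mul_of_nonneg_right h3 (norm_nonneg x)
      calc (1 + r) * ‖x‖ ^ 2 = (inner ℂ (T x) x : ℂ).re := h1
        _ ≤ ‖T x‖ * ‖x‖ := h2
        _ ≤ ‖T‖ * ‖x‖ * ‖x‖ := h4
        _ = ‖T‖ * ‖x‖ ^ 2 := by ring
    exact le_of_mul_le_mul_right (by linarith [hchain]) hxpos
  linarith [hub, hlb]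
end

section
/- Let d ≥ 1, let (e_i)_{i=1}^d and (f_j)_{j=1}^d be two orthonormal bases of ℂ^d, and let p and q be d×d matrices with nonnegative entries such that Σ_a p_{a,i} = 1 for every i and Σ_a q_{a,j} = 1 for every j. For each a set M_a = Σ_i p_{a,i}·P_{e_i} and N_a = Σ_j q_{a,j}·P_{f_j}, where P_w denotes the orthogonal projection onto the line spanned by w. Then Σ_{a,b=1}^d ‖M_a + N_b‖ ≤ d² + Σ_{i,j=1}^d |⟨e_i, f_j⟩|, where ‖·‖ is the operator norm. -/
open Finset
noncomputable section
set_option maxHeartbeats 1000000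

lemma quad_bound {d : ℕ} (e f : OrthonormalBasis (Fin d) ℂ (EuclideanSpace ℂ (Fin d)))
    (A B : Finset (Fin d)) (x : EuclideanSpace ℂ (Fin d)) :
    (∑ i ∈ A, ‖(inner ℂ (e i) x : ℂ)‖ ^ 2) + (∑ j ∈ B, ‖(inner ℂ (f j) x : ℂ)‖ ^ 2)
      ≤ (1 + ∑ i ∈ A, ∑ j ∈ B, ‖(inner ℂ (e i) (f j) : ℂ)‖) * ‖x‖ ^ 2 := by
  by_cases hx : x = 0
  · simp [hx]
  set σ := ∑ i ∈ A, ‖(inner ℂ (e i) x : ℂ)‖ ^ 2 with hσdef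
  set τ := ∑ j ∈ B, ‖(inner ℂ (f j) x : ℂ)‖ ^ 2 with hτdef
  set K := ∑ i ∈ A, ∑ j ∈ B, ‖(inner ℂ (e i) (f j) : ℂ)‖ with hKdef
  have hσ0 : 0 ≤ σ := Finset.sum_nonneg fun _ _ => by positivity
  have hτ0 : 0 ≤ τ := Finset.sum_nonneg fun _ _ => by positivity
  have hK0 : 0 ≤ K := Finset.sum_nonneg fun _ _ => Finset.sum_nonneg fun _ _ => norm_nonneg _
  set u : EuclideanSpace ℂ (Fin d) := ∑ i ∈ A, (inner ℂ (e i) x : ℂ) • (e i : EuclideanSpace ℂ (Fin d)) with hudef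
  set v : EuclideanSpace ℂ (Fin d) := ∑ j ∈ B, (inner ℂ (f j) x : ℂ) • (f j : EuclideanSpace ℂ (Fin d)) with hvdef
  have huu : (inner ℂ u u : ℂ) = (σ : ℂ) := by
    rw [hudef, e.orthonormal.inner_sum, hσdef]
    push_cast
    exact Finset.sum_congr rfl fun i _ => RCLike.conj_mul _
  have hvv : (inner ℂ v v : ℂ) = (τ : ℂ) := by
    rw [hvdef, f.orthonormal.inner_sum, hτdef]
    push_cast
    exact Finset.sum_congr rfl fun j _ => RCLike.conj_mul _
  have hnu : ‖u‖ ^ 2 = σ := by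
    have := inner_self_eq_norm_sq (𝕜 := ℂ) u
    rw [huu] at this; simpa using this.symm
  have hnv : ‖v‖ ^ 2 = τ := by
    have := inner_self_eq_norm_sq (𝕜 := ℂ) v
    rw [hvv] at this; simpa using this.symm
  have hxu : (inner ℂ x u : ℂ) = (σ : ℂ) := by
    rw [hudef, inner_sum, hσdef]
    push_cast
    refine Finset.sum_congr rfl fun i _ => ?_
    rw [inner_smul_right, ← inner_conj_symm x (e i : EuclideanSpace ℂ (Fin d)),
      RCLike.mul_conj]
    norm_cast
  have hxv : (inner ℂ x v : ℂ) = (τ : ℂ) := by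
    rw [hvdef, inner_sum, hτdef]
    push_cast
    refine Finset.sum_congr rfl fun j _ => ?_
    rw [inner_smul_right, ← inner_conj_symm x (f j : EuclideanSpace ℂ (Fin d)),
      RCLike.mul_conj]
    norm_cast
  -- bound on |inner u v|
  have hsqrt_bound : ∀ i ∈ A, ‖(inner ℂ (e i) x : ℂ)‖ ≤ Real.sqrt σ := by
    intro i hi
    have h1 : ‖(inner ℂ (e i) x : ℂ)‖ ^ 2 ≤ σ := by
      rw [hσdef]
      exact Finset.single_le_sum (f := fun i => ‖(inner ℂ (e i) x : ℂ)‖ ^ 2)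
        (fun _ _ => by positivity) hi
    have := Real.sqrt_le_sqrt h1
    rwa [Real.sqrt_sq (norm_nonneg _)] at this
  have htsqrt_bound : ∀ j ∈ B, ‖(inner ℂ (f j) x : ℂ)‖ ≤ Real.sqrt τ := by
    intro j hj
    have h1 : ‖(inner ℂ (f j) x : ℂ)‖ ^ 2 ≤ τ := by
      rw [hτdef]
      exact Finset.single_le_sum (f := fun j => ‖(inner ℂ (f j) x : ℂ)‖ ^ 2)
        (fun _ _ => by positivity) hj
    have := Real.sqrt_le_sqrt h1
    rwa [Real.sqrt_sq (norm_nonneg _)] at this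
  have huv_expand : (inner ℂ u v : ℂ)
      = ∑ i ∈ A, ∑ j ∈ B,
          (starRingEnd ℂ) (inner ℂ (e i) x : ℂ) * ((inner ℂ (f j) x : ℂ) * (inner ℂ (e i) (f j) : ℂ)) := by
    rw [hudef, hvdef, sum_inner]
    refine Finset.sum_congr rfl fun i _ => ?_
    rw [inner_smul_left, inner_sum, Finset.mul_sum]
    refine Finset.sum_congr rfl fun j _ => ?_
    rw [inner_smul_right]
  have huv : ‖(inner ℂ u v : ℂ)‖ ≤ Real.sqrt σ * Real.sqrt τ * K := by
    rw [huv_expand, hKdef, Finset.mul_sum]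
    refine (norm_sum_le _ _).trans (Finset.sum_le_sum fun i hi => ?_)
    rw [Finset.mul_sum]
    refine (norm_sum_le _ _).trans (Finset.sum_le_sum fun j hj => ?_)
    rw [norm_mul, norm_mul, RCLike.norm_conj]
    calc ‖(inner ℂ (e i) x : ℂ)‖ * (‖(inner ℂ (f j) x : ℂ)‖ * ‖(inner ℂ (e i) (f j) : ℂ)‖)
        ≤ Real.sqrt σ * (Real.sqrt τ * ‖(inner ℂ (e i) (f j) : ℂ)‖) := by
          gcongr
          · exact hsqrt_bound i hi
          · exact htsqrt_bound j hj
      _ = Real.sqrt σ * Real.sqrt τ * ‖(inner ℂ (e i) (f j) : ℂ)‖ := by ring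
  -- key quadratic inequality
  set S := σ + τ with hSdef
  set t := ‖x‖ ^ 2 with htdef
  have ht0 : 0 < t := by
    rw [htdef]
    have : 0 < ‖x‖ := norm_pos_iff.2 hx
    positivity
  clear_value σ τ K u v S t
  have hre_uv : Complex.re (inner ℂ u v : ℂ) ≤ K * (S / 2) := by
    have h1 : Complex.re (inner ℂ u v : ℂ) ≤ ‖(inner ℂ u v : ℂ)‖ := Complex.re_le_norm _
    have h2 : Real.sqrt σ * Real.sqrt τ ≤ S / 2 := by
      nlinarith [sq_nonneg (Real.sqrt σ - Real.sqrt τ), Real.sq_sqrt hσ0, Real.sq_sqrt hτ0,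
        Real.sqrt_nonneg σ, Real.sqrt_nonneg τ]
    calc Complex.re (inner ℂ u v : ℂ) ≤ Real.sqrt σ * Real.sqrt τ * K := h1.trans huv
      _ ≤ S / 2 * K := by nlinarith
      _ = K * (S / 2) := by ring
  have key : (0:ℝ) ≤ ‖((S:ℂ) • x) - ((t:ℂ) • (u + v))‖ ^ 2 := by positivity
  have expand : ‖((S:ℂ) • x) - ((t:ℂ) • (u + v))‖ ^ 2
      = ‖(S:ℂ) • x‖ ^ 2 - 2 * Complex.re (inner ℂ ((S:ℂ) • x) ((t:ℂ) • (u + v)) : ℂ)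
        + ‖(t:ℂ) • (u + v)‖ ^ 2 := by
    have h := norm_sub_sq (𝕜 := ℂ) ((S:ℂ) • x) ((t:ℂ) • (u + v))
    rwa [RCLike.re_to_complex] at h
  have hS0 : 0 ≤ S := by rw [hSdef]; exact add_nonneg hσ0 hτ0
  have pa : ‖(S:ℂ) • x‖ ^ 2 = S ^ 2 * t := by
    rw [norm_smul, Complex.norm_real, Real.norm_eq_abs, abs_of_nonneg hS0, htdef]
    ring
  have pc : (inner ℂ x (u + v) : ℂ) = ((S : ℝ) : ℂ) := by
    rw [inner_add_right, hxu, hxv, hSdef]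
    push_cast
    ring
  have pb : Complex.re (inner ℂ ((S:ℂ) • x) ((t:ℂ) • (u + v)) : ℂ) = S * t * S := by
    rw [inner_smul_left, inner_smul_right, pc, Complex.conj_ofReal]
    push_cast
    simp [Complex.ofReal_mul]
    ring
  have pe : ‖u + v‖ ^ 2 = σ + τ + 2 * Complex.re (inner ℂ u v : ℂ) := by
    have h := norm_add_sq (𝕜 := ℂ) u v
    rw [RCLike.re_to_complex] at h
    rw [h, hnu, hnv]
    ring
  have pd : ‖(t:ℂ) • (u + v)‖ ^ 2 = t ^ 2 * (σ + τ + 2 * Complex.re (inner ℂ u v : ℂ)) := by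
    rw [norm_smul, Complex.norm_real, Real.norm_eq_abs, abs_of_nonneg (le_of_lt ht0), mul_pow, pe]
  have main : (0:ℝ) ≤ S ^ 2 * t - 2 * (S * t * S) + t ^ 2 * (S + 2 * (K * (S / 2))) := by
    have h := key
    rw [expand, pa, pb, pd, ← hSdef] at h
    have hmul : t ^ 2 * (Complex.re (inner ℂ u v : ℂ)) ≤ t ^ 2 * (K * (S / 2)) :=
      mul_le_mul_of_nonneg_left hre_uv (sq_nonneg t)
    nlinarith [hmul, h]
  by_cases hS : S = 0
  · rw [hS]
    positivity
  have hSpos : 0 < S := lt_of_le_of_ne hS0 (Ne.symm hS)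
  by_contra hcon
  push_neg at hcon
  have hlt : S * t * ((1 + K) * t) < S * t * S :=
    mul_lt_mul_of_pos_left hcon (mul_pos hSpos ht0)
  nlinarith [main, hlt]

lemma cs_sum (s : Finset (Fin d)) (a b : Fin d → ℝ) (ha : ∀ i, 0 ≤ a i) (hb : ∀ i, 0 ≤ b i) :
    ∑ i ∈ s, a i * b i ≤ Real.sqrt (∑ i ∈ s, a i ^ 2) * Real.sqrt (∑ i ∈ s, b i ^ 2) := by
  have h := Finset.sum_mul_sq_le_sq_mul_sq s a b
  have h0 : 0 ≤ ∑ i ∈ s, a i * b i := Finset.sum_nonneg fun i _ => mul_nonneg (ha i) (hb i)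
  rw [← Real.sqrt_mul_self h0]
  rw [← Real.sqrt_mul (Finset.sum_nonneg fun i _ => sq_nonneg (a i))]
  exact Real.sqrt_le_sqrt (by nlinarith [h])

lemma sqrt_add_mix (a b c e : ℝ) (ha : 0 ≤ a) (hb : 0 ≤ b) (hc : 0 ≤ c) (he : 0 ≤ e) :
    Real.sqrt a * Real.sqrt b + Real.sqrt c * Real.sqrt e
      ≤ Real.sqrt (a + c) * Real.sqrt (b + e) := by
  rw [← Real.sqrt_mul ha, ← Real.sqrt_mul hc, ← Real.sqrt_mul (by linarith)]
  have h1 : 0 ≤ a * b := mul_nonneg ha hb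
  have h2 : 0 ≤ c * e := mul_nonneg hc he
  have key : (Real.sqrt (a*b) + Real.sqrt (c*e)) ^ 2 ≤ (a + c) * (b + e) := by
    have e1 : Real.sqrt (a*b) ^ 2 = a * b := Real.sq_sqrt h1
    have e2 : Real.sqrt (c*e) ^ 2 = c * e := Real.sq_sqrt h2
    have e3 : Real.sqrt (a*b) * Real.sqrt (c*e) = Real.sqrt (a*b*(c*e)) :=
      (Real.sqrt_mul h1 _).symm
    have e4 : Real.sqrt (a*b*(c*e)) = Real.sqrt (a*e) * Real.sqrt (c*b) := by
      rw [← Real.sqrt_mul (mul_nonneg ha he)]; ring_nf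
    have e5 : Real.sqrt (a*e) ^ 2 = a * e := Real.sq_sqrt (mul_nonneg ha he)
    have e6 : Real.sqrt (c*b) ^ 2 = c * b := Real.sq_sqrt (mul_nonneg hc hb)
    nlinarith [sq_nonneg (Real.sqrt (a*e) - Real.sqrt (c*b)), Real.sqrt_nonneg (a*b),
      Real.sqrt_nonneg (c*e)]
  have hs : 0 ≤ Real.sqrt (a*b) + Real.sqrt (c*e) := by positivity
  calc Real.sqrt (a*b) + Real.sqrt (c*e)
      = Real.sqrt ((Real.sqrt (a*b) + Real.sqrt (c*e))^2) := (Real.sqrt_sq hs).symm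
    _ ≤ Real.sqrt ((a+c)*(b+e)) := Real.sqrt_le_sqrt key

lemma opNorm_proj_sum_le (e f : OrthonormalBasis (Fin d) ℂ (EuclideanSpace ℂ (Fin d)))
    (A B : Finset (Fin d)) :
    ‖(∑ i ∈ A, (innerSL ℂ (e i)).smulRight (e i))
        + (∑ j ∈ B, (innerSL ℂ (f j)).smulRight (f j))‖
      ≤ 1 + ∑ i ∈ A, ∑ j ∈ B, ‖(inner ℂ (e i) (f j) : ℂ)‖ := by
  set T := (∑ i ∈ A, (innerSL ℂ (e i)).smulRight (e i))
        + (∑ j ∈ B, (innerSL ℂ (f j)).smulRight (f j)) with hTdef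
  set K := ∑ i ∈ A, ∑ j ∈ B, ‖(inner ℂ (e i) (f j) : ℂ)‖ with hKdef
  have hK0 : 0 ≤ K := Finset.sum_nonneg fun _ _ => Finset.sum_nonneg fun _ _ => norm_nonneg _
  have hC0 : (0:ℝ) ≤ 1 + K := by linarith
  have hTx : ∀ x : EuclideanSpace ℂ (Fin d),
      T x = (∑ i ∈ A, (inner ℂ (e i) x : ℂ) • (e i : EuclideanSpace ℂ (Fin d)))
          + ∑ j ∈ B, (inner ℂ (f j) x : ℂ) • (f j : EuclideanSpace ℂ (Fin d)) := by
    intro x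
    simp [hTdef, ContinuousLinearMap.sum_apply]
  have hinner : ∀ x y : EuclideanSpace ℂ (Fin d),
      ‖(inner ℂ y (T x) : ℂ)‖ ≤ (1 + K) * (‖y‖ * ‖x‖) := by
    intro x y
    have hexp : (inner ℂ y (T x) : ℂ)
        = (∑ i ∈ A, (inner ℂ (e i) x : ℂ) * (inner ℂ y (e i) : ℂ))
          + ∑ j ∈ B, (inner ℂ (f j) x : ℂ) * (inner ℂ y (f j) : ℂ) := by
      rw [hTx, inner_add_right, inner_sum, inner_sum]
      simp [inner_smul_right]
    have h1 : ‖(inner ℂ y (T x) : ℂ)‖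
        ≤ (∑ i ∈ A, ‖(inner ℂ (e i) x : ℂ)‖ * ‖(inner ℂ (e i) y : ℂ)‖)
          + ∑ j ∈ B, ‖(inner ℂ (f j) x : ℂ)‖ * ‖(inner ℂ (f j) y : ℂ)‖ := by
      rw [hexp]
      refine (norm_add_le _ _).trans (add_le_add ?_ ?_) <;>
        refine (norm_sum_le _ _).trans (Finset.sum_le_sum fun i _ => ?_) <;>
          · rw [norm_mul]
            exact mul_le_mul_of_nonneg_left (le_of_eq (norm_inner_symm _ _)) (norm_nonneg _)
    have cs1 := cs_sum A (fun i => ‖(inner ℂ (e i) x : ℂ)‖) (fun i => ‖(inner ℂ (e i) y : ℂ)‖)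
      (fun i => norm_nonneg _) (fun i => norm_nonneg _)
    have cs2 := cs_sum B (fun j => ‖(inner ℂ (f j) x : ℂ)‖) (fun j => ‖(inner ℂ (f j) y : ℂ)‖)
      (fun j => norm_nonneg _) (fun j => norm_nonneg _)
    have mix := sqrt_add_mix (∑ i ∈ A, ‖(inner ℂ (e i) x : ℂ)‖^2) (∑ i ∈ A, ‖(inner ℂ (e i) y : ℂ)‖^2)
      (∑ j ∈ B, ‖(inner ℂ (f j) x : ℂ)‖^2) (∑ j ∈ B, ‖(inner ℂ (f j) y : ℂ)‖^2)
      (Finset.sum_nonneg fun _ _ => sq_nonneg _) (Finset.sum_nonneg fun _ _ => sq_nonneg _)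
      (Finset.sum_nonneg fun _ _ => sq_nonneg _) (Finset.sum_nonneg fun _ _ => sq_nonneg _)
    have qx := quad_bound e f A B x
    have qy := quad_bound e f A B y
    have hx2 : Real.sqrt ((∑ i ∈ A, ‖(inner ℂ (e i) x : ℂ)‖^2) + ∑ j ∈ B, ‖(inner ℂ (f j) x : ℂ)‖^2)
        ≤ Real.sqrt (1 + K) * ‖x‖ := by
      have hh := Real.sqrt_le_sqrt (by rw [hKdef]; exact qx :
        (∑ i ∈ A, ‖(inner ℂ (e i) x : ℂ)‖^2) + ∑ j ∈ B, ‖(inner ℂ (f j) x : ℂ)‖^2 ≤ (1 + K) * ‖x‖ ^ 2)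
      rwa [Real.sqrt_mul hC0, Real.sqrt_sq (norm_nonneg x)] at hh
    have hy2 : Real.sqrt ((∑ i ∈ A, ‖(inner ℂ (e i) y : ℂ)‖^2) + ∑ j ∈ B, ‖(inner ℂ (f j) y : ℂ)‖^2)
        ≤ Real.sqrt (1 + K) * ‖y‖ := by
      have hh := Real.sqrt_le_sqrt (by rw [hKdef]; exact qy :
        (∑ i ∈ A, ‖(inner ℂ (e i) y : ℂ)‖^2) + ∑ j ∈ B, ‖(inner ℂ (f j) y : ℂ)‖^2 ≤ (1 + K) * ‖y‖ ^ 2)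
      rwa [Real.sqrt_mul hC0, Real.sqrt_sq (norm_nonneg y)] at hh
    have hfin : Real.sqrt ((∑ i ∈ A, ‖(inner ℂ (e i) x : ℂ)‖^2) + ∑ j ∈ B, ‖(inner ℂ (f j) x : ℂ)‖^2)
        * Real.sqrt ((∑ i ∈ A, ‖(inner ℂ (e i) y : ℂ)‖^2) + ∑ j ∈ B, ‖(inner ℂ (f j) y : ℂ)‖^2)
        ≤ (1 + K) * (‖y‖ * ‖x‖) := by
      calc _ ≤ (Real.sqrt (1+K) * ‖x‖) * (Real.sqrt (1+K) * ‖y‖) :=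
            mul_le_mul hx2 hy2 (Real.sqrt_nonneg _) (by positivity)
        _ = (Real.sqrt (1+K) * Real.sqrt (1+K)) * (‖y‖ * ‖x‖) := by ring
        _ = (1 + K) * (‖y‖ * ‖x‖) := by rw [Real.mul_self_sqrt hC0]
    calc ‖(inner ℂ y (T x) : ℂ)‖ ≤ _ := h1
      _ ≤ Real.sqrt (∑ i ∈ A, ‖(inner ℂ (e i) x : ℂ)‖^2) * Real.sqrt (∑ i ∈ A, ‖(inner ℂ (e i) y : ℂ)‖^2)
          + Real.sqrt (∑ j ∈ B, ‖(inner ℂ (f j) x : ℂ)‖^2) * Real.sqrt (∑ j ∈ B, ‖(inner ℂ (f j) y : ℂ)‖^2) :=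
            add_le_add cs1 cs2
      _ ≤ _ := mix
      _ ≤ (1 + K) * (‖y‖ * ‖x‖) := hfin
  refine ContinuousLinearMap.opNorm_le_bound T hC0 fun x => ?_
  by_cases hTx0 : T x = 0
  · rw [hTx0]; simp; positivity
  · have h := hinner x (T x)
    have hid : ‖(inner ℂ (T x) (T x) : ℂ)‖ = ‖T x‖ ^ 2 := by
      rw [inner_self_eq_norm_sq_to_K, norm_pow, RCLike.norm_ofReal, abs_norm]
    rw [hid] at h
    have hpos : 0 < ‖T x‖ := norm_pos_iff.2 hTx0
    by_contra hcon
    push_neg at hcon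
    have hlt : ((1 + K) * ‖x‖) * ‖T x‖ < ‖T x‖ * ‖T x‖ :=
      mul_lt_mul_of_pos_right hcon hpos
    nlinarith [h, hlt]

lemma weight_total {d : ℕ} (p : Fin d → Fin d → ℝ) (hpcol : ∀ i, ∑ a, p a i = 1) :
    ∑ g : Fin d → Fin d, ∏ i, p (g i) i = 1 := by
  classical
  have h := Finset.prod_univ_sum (fun _ : Fin d => (Finset.univ : Finset (Fin d)))
    (fun i a => p a i)
  simp only [hpcol, Finset.prod_const_one] at h
  rw [Fintype.piFinset_univ] at h
  exact h.symm

lemma weight_fiber {d : ℕ} (p : Fin d → Fin d → ℝ) (hpcol : ∀ i, ∑ a, p a i = 1)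
    (a i₀ : Fin d) :
    ∑ g ∈ Finset.univ.filter (fun g : Fin d → Fin d => g i₀ = a), ∏ i, p (g i) i = p a i₀ := by
  classical
  rw [Finset.sum_filter]
  have step1 : ∀ g : Fin d → Fin d,
      (if g i₀ = a then ∏ i, p (g i) i else 0)
        = ∏ i, (if i = i₀ then (if g i = a then p (g i) i else 0) else p (g i) i) := by
    intro g
    by_cases h : g i₀ = a
    · rw [if_pos h]
      refine Finset.prod_congr rfl fun i _ => ?_
      by_cases hi : i = i₀
      · subst hi; rw [if_pos rfl, if_pos h]
      · rw [if_neg hi]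
    · rw [if_neg h]
      refine (Finset.prod_eq_zero (Finset.mem_univ i₀) ?_).symm
      rw [if_pos rfl, if_neg h]
  simp_rw [step1]
  have h := Finset.prod_univ_sum (fun _ : Fin d => (Finset.univ : Finset (Fin d)))
    (fun i x => if i = i₀ then (if x = a then p x i else 0) else p x i)
  rw [Fintype.piFinset_univ] at h
  rw [← h]
  have : ∀ i : Fin d, (∑ x : Fin d, if i = i₀ then (if x = a then p x i else 0) else p x i)
      = if i = i₀ then p a i₀ else 1 := by
    intro i
    by_cases hi : i = i₀
    · subst hi
      simp only [if_pos rfl]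
      simp [Finset.sum_ite_eq' Finset.univ a (fun x => p x i)]
    · simp only [if_neg hi]
      exact hpcol i
  rw [Finset.prod_congr rfl fun i _ => this i]
  simp

lemma op_decomp {d : ℕ} {V : Type*} [AddCommMonoid V] [Module ℂ V]
    (p : Fin d → Fin d → ℝ) (hpcol : ∀ i, ∑ a, p a i = 1) (a : Fin d) (T : Fin d → V) :
    (∑ i, ((p a i : ℂ) • T i))
      = ∑ g : Fin d → Fin d, ((∏ i, p (g i) i : ℝ) : ℂ)
          • ∑ i ∈ Finset.univ.filter (fun i => g i = a), T i := by
  classical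
  have rhs : ∀ g : Fin d → Fin d,
      ((∏ i, p (g i) i : ℝ) : ℂ) • ∑ i ∈ Finset.univ.filter (fun i => g i = a), T i
        = ∑ i, (if g i = a then ((∏ i', p (g i') i' : ℝ) : ℂ) • T i else 0) := by
    intro g
    rw [Finset.smul_sum, Finset.sum_filter]
  simp_rw [rhs]
  rw [Finset.sum_comm]
  refine Finset.sum_congr rfl fun i _ => ?_
  have : ∀ g : Fin d → Fin d,
      (if g i = a then ((∏ i', p (g i') i' : ℝ) : ℂ) • T i else 0)
        = ((if g i = a then (∏ i', p (g i') i' : ℝ) else 0 : ℝ) : ℂ) • T i := by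
    intro g
    by_cases h : g i = a <;> simp [h]
  simp_rw [this, ← Finset.sum_smul, ← Complex.ofReal_sum, ← Finset.sum_filter,
    weight_fiber p hpcol a i]

lemma sum_swap4 {α β : Type*} [Fintype α] [Fintype β] (F : α → α → β → β → ℝ) :
    ∑ a, ∑ b, ∑ g, ∑ h, F a b g h = ∑ g, ∑ h, ∑ a, ∑ b, F a b g h := by
  calc ∑ a, ∑ b, ∑ g, ∑ h, F a b g h
      = ∑ a, ∑ g, ∑ b, ∑ h, F a b g h :=
        Finset.sum_congr rfl fun a _ => Finset.sum_comm
    _ = ∑ g, ∑ a, ∑ b, ∑ h, F a b g h := Finset.sum_comm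
    _ = ∑ g, ∑ a, ∑ h, ∑ b, F a b g h :=
        Finset.sum_congr rfl fun g _ => Finset.sum_congr rfl fun a _ => Finset.sum_comm
    _ = ∑ g, ∑ h, ∑ a, ∑ b, F a b g h :=
        Finset.sum_congr rfl fun g _ => Finset.sum_comm

/-- Let `(e_i)`, `(f_j)` be orthonormal bases of `ℂ^d` and let `p, q` be stochastic
post-processings (nonnegative entries, columns summing to 1).  For
`M_a = Σ_i p_{a,i}·P_{e_i}` and `N_a = Σ_j q_{a,j}·P_{f_j}` (rank-one orthogonal
projections `P_w`), one has `Σ_{a,b} ‖M_a + N_b‖ ≤ d² + Σ_{i,j} |⟨e_i, f_j⟩|`. -/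
theorem sum_opNorm_post_processed_le (d : ℕ) (hd : 1 ≤ d)
    (e f : OrthonormalBasis (Fin d) ℂ (EuclideanSpace ℂ (Fin d)))
    (p q : Fin d → Fin d → ℝ)
    (hp : ∀ a i, 0 ≤ p a i) (hq : ∀ a j, 0 ≤ q a j)
    (hpcol : ∀ i, ∑ a, p a i = 1) (hqcol : ∀ j, ∑ a, q a j = 1) :
    ∑ a, ∑ b,
        ‖(∑ i, ((p a i : ℂ) • (innerSL ℂ (e i)).smulRight (e i))) +
          (∑ j, ((q b j : ℂ) • (innerSL ℂ (f j)).smulRight (f j)))‖ ≤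
      (d : ℝ) ^ 2 + ∑ i, ∑ j, ‖(inner ℂ (e i) (f j) : ℂ)‖ := by
  classical
  set Pe : Fin d → (EuclideanSpace ℂ (Fin d) →L[ℂ] EuclideanSpace ℂ (Fin d)) :=
    fun i => (innerSL ℂ (e i)).smulRight (e i) with hPe
  set Pf : Fin d → (EuclideanSpace ℂ (Fin d) →L[ℂ] EuclideanSpace ℂ (Fin d)) :=
    fun j => (innerSL ℂ (f j)).smulRight (f j) with hPf
  set w : (Fin d → Fin d) → ℝ := fun g => ∏ i, p (g i) i with hw
  set v : (Fin d → Fin d) → ℝ := fun h => ∏ j, q (h j) j with hv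
  have hw0 : ∀ g, 0 ≤ w g := fun g => Finset.prod_nonneg fun i _ => hp _ _
  have hv0 : ∀ h, 0 ≤ v h := fun h => Finset.prod_nonneg fun j _ => hq _ _
  have hwtot : ∑ g : Fin d → Fin d, w g = 1 := weight_total p hpcol
  have hvtot : ∑ h : Fin d → Fin d, v h = 1 := weight_total q hqcol
  set MG : (Fin d → Fin d) → Fin d → (EuclideanSpace ℂ (Fin d) →L[ℂ] EuclideanSpace ℂ (Fin d)) :=
    fun g a => ∑ i ∈ Finset.univ.filter (fun i => g i = a), Pe i with hMG
  set NH : (Fin d → Fin d) → Fin d → (EuclideanSpace ℂ (Fin d) →L[ℂ] EuclideanSpace ℂ (Fin d)) :=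
    fun h b => ∑ j ∈ Finset.univ.filter (fun j => h j = b), Pf j with hNH
  set c : Fin d → Fin d → ℝ := fun i j => ‖(inner ℂ (e i) (f j) : ℂ)‖ with hc
  set KK : (Fin d → Fin d) → (Fin d → Fin d) → Fin d → Fin d → ℝ :=
    fun g h a b => ∑ i ∈ Finset.univ.filter (fun i => g i = a),
      ∑ j ∈ Finset.univ.filter (fun j => h j = b), c i j with hKK
  -- step 1: pointwise bound
  have step1 : ∀ a b : Fin d,
      ‖(∑ i, ((p a i : ℂ) • Pe i)) + (∑ j, ((q b j : ℂ) • Pf j))‖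
        ≤ ∑ g : Fin d → Fin d, ∑ h : Fin d → Fin d, w g * v h * (1 + KK g h a b) := by
    intro a b
    have hM : (∑ i, ((p a i : ℂ) • Pe i)) = ∑ g : Fin d → Fin d, (w g : ℂ) • MG g a :=
      op_decomp p hpcol a Pe
    have hN : (∑ j, ((q b j : ℂ) • Pf j)) = ∑ h : Fin d → Fin d, (v h : ℂ) • NH h b :=
      op_decomp q hqcol b Pf
    have hM2 : (∑ g : Fin d → Fin d, (w g : ℂ) • MG g a)
        = ∑ g : Fin d → Fin d, ∑ h : Fin d → Fin d, ((w g * v h : ℝ) : ℂ) • MG g a := by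
      refine Finset.sum_congr rfl fun g _ => ?_
      rw [← Finset.sum_smul]
      congr 1
      rw [← Complex.ofReal_sum, ← Finset.mul_sum, hvtot, mul_one]
    have hN2 : (∑ h : Fin d → Fin d, (v h : ℂ) • NH h b)
        = ∑ g : Fin d → Fin d, ∑ h : Fin d → Fin d, ((w g * v h : ℝ) : ℂ) • NH h b := by
      rw [Finset.sum_comm]
      refine Finset.sum_congr rfl fun h _ => ?_
      rw [← Finset.sum_smul]
      congr 1
      rw [← Complex.ofReal_sum]
      norm_cast
      rw [← Finset.sum_mul, hwtot, one_mul]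
    have hsum : (∑ i, ((p a i : ℂ) • Pe i)) + (∑ j, ((q b j : ℂ) • Pf j))
        = ∑ g : Fin d → Fin d, ∑ h : Fin d → Fin d,
            ((w g * v h : ℝ) : ℂ) • (MG g a + NH h b) := by
      rw [hM, hN, hM2, hN2, ← Finset.sum_add_distrib]
      refine Finset.sum_congr rfl fun g _ => ?_
      rw [← Finset.sum_add_distrib]
      refine Finset.sum_congr rfl fun h _ => ?_
      rw [smul_add]
    rw [hsum]
    refine (norm_sum_le _ _).trans ?_
    refine (Finset.sum_le_sum fun g _ => norm_sum_le _ _).trans ?_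
    refine Finset.sum_le_sum fun g _ => Finset.sum_le_sum fun h _ => ?_
    calc ‖((w g * v h : ℝ) : ℂ) • (MG g a + NH h b)‖
        ≤ ‖((w g * v h : ℝ) : ℂ)‖ * ‖MG g a + NH h b‖ :=
          ContinuousLinearMap.opNorm_smul_le _ _
      _ = (w g * v h) * ‖MG g a + NH h b‖ := by
          rw [Complex.norm_real, Real.norm_eq_abs,
            abs_of_nonneg (mul_nonneg (hw0 g) (hv0 h))]
      _ ≤ w g * v h * (1 + KK g h a b) := by
          refine mul_le_mul_of_nonneg_left ?_ (mul_nonneg (hw0 g) (hv0 h))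
          exact opNorm_proj_sum_le e f _ _
  -- step 2: sum the bound
  have step2 : ∀ g h : Fin d → Fin d,
      ∑ a : Fin d, ∑ b : Fin d, (1 + KK g h a b) = (d:ℝ)^2 + ∑ i, ∑ j, c i j := by
    intro g h
    have h1 : ∑ a : Fin d, ∑ b : Fin d, (1 + KK g h a b)
        = (∑ a : Fin d, ∑ b : Fin d, (1:ℝ)) + ∑ a : Fin d, ∑ b : Fin d, KK g h a b := by
      rw [← Finset.sum_add_distrib]
      refine Finset.sum_congr rfl fun a _ => ?_
      rw [← Finset.sum_add_distrib]
    have h2 : ∑ a : Fin d, ∑ b : Fin d, (1:ℝ) = (d:ℝ)^2 := by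
      simp [Finset.sum_const]
      ring
    have h3 : ∑ a : Fin d, ∑ b : Fin d, KK g h a b = ∑ i, ∑ j, c i j := by
      rw [hKK]
      have inner_eq : ∀ a : Fin d, ∀ i : Fin d,
          ∑ b : Fin d, ∑ j ∈ Finset.univ.filter (fun j => h j = b), c i j = ∑ j, c i j :=
        fun a i => Finset.sum_fiberwise Finset.univ h (c i)
      calc ∑ a : Fin d, ∑ b : Fin d, ∑ i ∈ Finset.univ.filter (fun i => g i = a),
              ∑ j ∈ Finset.univ.filter (fun j => h j = b), c i j
          = ∑ a : Fin d, ∑ i ∈ Finset.univ.filter (fun i => g i = a),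
              ∑ b : Fin d, ∑ j ∈ Finset.univ.filter (fun j => h j = b), c i j := by
            refine Finset.sum_congr rfl fun a _ => Finset.sum_comm
        _ = ∑ a : Fin d, ∑ i ∈ Finset.univ.filter (fun i => g i = a), ∑ j, c i j := by
            refine Finset.sum_congr rfl fun a _ => Finset.sum_congr rfl fun i _ => inner_eq a i
        _ = ∑ i, ∑ j, c i j := Finset.sum_fiberwise Finset.univ g _
    rw [h1, h2, h3]
  have habs : ∑ i, ∑ j, ‖(inner ℂ (e i) (f j) : ℂ)‖ = ∑ i, ∑ j, c i j := by
    refine Finset.sum_congr rfl fun i _ => Finset.sum_congr rfl fun j _ => ?_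
    simp [hc]
  rw [habs]
  calc ∑ a, ∑ b, ‖(∑ i, ((p a i : ℂ) • Pe i)) + (∑ j, ((q b j : ℂ) • Pf j))‖
      ≤ ∑ a : Fin d, ∑ b : Fin d, ∑ g : Fin d → Fin d, ∑ h : Fin d → Fin d,
          w g * v h * (1 + KK g h a b) :=
        Finset.sum_le_sum fun a _ => Finset.sum_le_sum fun b _ => step1 a b
    _ = ∑ g : Fin d → Fin d, ∑ h : Fin d → Fin d, ∑ a : Fin d, ∑ b : Fin d,
          w g * v h * (1 + KK g h a b) := by
        exact sum_swap4 (fun a b g h => w g * v h * (1 + KK g h a b))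
    _ = ∑ g : Fin d → Fin d, ∑ h : Fin d → Fin d,
          w g * v h * ((d:ℝ)^2 + ∑ i, ∑ j, c i j) := by
        refine Finset.sum_congr rfl fun g _ => Finset.sum_congr rfl fun h _ => ?_
        simp_rw [← Finset.mul_sum]
        rw [step2 g h]
    _ = (d:ℝ)^2 + ∑ i, ∑ j, c i j := by
        have hgh : ∀ g : Fin d → Fin d,
            ∑ h : Fin d → Fin d, w g * v h * ((d:ℝ)^2 + ∑ i, ∑ j, c i j)
              = w g * ((d:ℝ)^2 + ∑ i, ∑ j, c i j) := by
          intro g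
          simp_rw [mul_assoc, ← Finset.mul_sum]
          rw [← Finset.sum_mul, hvtot, one_mul]
        simp_rw [hgh]
        rw [← Finset.sum_mul, hwtot, one_mul]

end
end

section
/- Let n_x, n_z be real numbers with n_x² + n_z² = 1, and let σ_x = [[0,1],[1,0]] and σ_z = [[1,0],[0,−1]] be the Pauli matrices. Then for every unit vector ψ ∈ ℂ², writing z = ⟨ψ, σ_z ψ⟩ and x = ⟨ψ, (n_x σ_x + n_z σ_z) ψ⟩ (both real since the operators are Hermitian), one has (1−n_z)·(x+z)² + (1+n_z)·(x−z)² ≤ 2·n_x². -/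
/-- The Pauli matrix `σ_x`. -/
def pauliX : Matrix (Fin 2) (Fin 2) ℂ := !![0, 1; 1, 0]

/-- The Pauli matrix `σ_z`. -/
def pauliZ : Matrix (Fin 2) (Fin 2) ℂ := !![1, 0; 0, -1]

/-- For `n_x² + n_z² = 1` and any unit vector `ψ ∈ ℂ²`, the expectation values
`z = ⟨ψ, σ_z ψ⟩` and `x = ⟨ψ, (n_x σ_x + n_z σ_z) ψ⟩` satisfy
`(1−n_z)(x+z)² + (1+n_z)(x−z)² ≤ 2 n_x²`, i.e. `(z,x)` lies in the ellipse with
semiaxes `a = n_x/√(1−n_z)`, `b = n_x/√(1+n_z)`. -/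
theorem qubit_statistics_ellipse (nx nz : ℝ) (hn : nx ^ 2 + nz ^ 2 = 1)
    (ψ : EuclideanSpace ℂ (Fin 2)) (hψ : ‖ψ‖ = 1) :
    (1 - nz) *
        ((inner ℂ ψ (Matrix.toEuclideanLin ((nx : ℂ) • pauliX + (nz : ℂ) • pauliZ) ψ) : ℂ).re +
          (inner ℂ ψ (Matrix.toEuclideanLin pauliZ ψ) : ℂ).re) ^ 2 +
      (1 + nz) *
        ((inner ℂ ψ (Matrix.toEuclideanLin ((nx : ℂ) • pauliX + (nz : ℂ) • pauliZ) ψ) : ℂ).re -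
          (inner ℂ ψ (Matrix.toEuclideanLin pauliZ ψ) : ℂ).re) ^ 2 ≤
      2 * nx ^ 2 := by
  obtain ⟨p, q, r, s, hp, hq, hr, hs⟩ : ∃ p q r s : ℝ, (ψ 0).re = p ∧ (ψ 0).im = q ∧
      (ψ 1).re = r ∧ (ψ 1).im = s := ⟨_, _, _, _, rfl, rfl, rfl, rfl⟩
  have hnorm : p ^ 2 + q ^ 2 + r ^ 2 + s ^ 2 = 1 := by
    have h2 : (inner ℂ ψ ψ : ℂ).re = 1 := by
      rw [inner_self_eq_norm_sq_to_K (𝕜 := ℂ) ψ, hψ]; norm_num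
    rw [PiLp.inner_apply] at h2
    simpa [Fin.sum_univ_two, Complex.mul_re, Complex.conj_re, Complex.conj_im,
      hp, hq, hr, hs, sq, add_assoc,
      (by intro z; rw [← sq, ← Complex.normSq_eq_norm_sq] : ∀ z : ℂ, ‖z‖ * ‖z‖ = Complex.normSq z),
      Complex.normSq_apply] using h2
  have hz : (inner ℂ ψ (Matrix.toEuclideanLin pauliZ ψ) : ℂ).re
      = p ^ 2 + q ^ 2 - r ^ 2 - s ^ 2 := by
    simp [Matrix.toEuclideanLin_apply, PiLp.inner_apply, Fin.sum_univ_two, Matrix.mulVec,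
      dotProduct, pauliZ, Complex.mul_re, Complex.conj_re, Complex.conj_im, hp, hq, hr, hs]
    ring
  have hx : (inner ℂ ψ (Matrix.toEuclideanLin ((nx : ℂ) • pauliX + (nz : ℂ) • pauliZ) ψ) : ℂ).re
      = nx * (2 * (p * r + q * s)) + nz * (p ^ 2 + q ^ 2 - r ^ 2 - s ^ 2) := by
    simp [Matrix.toEuclideanLin_apply, PiLp.inner_apply, Fin.sum_univ_two, Matrix.mulVec,
      dotProduct, pauliX, pauliZ, Matrix.add_apply, Matrix.smul_apply,
      Complex.mul_re, Complex.mul_im, Complex.conj_re, Complex.conj_im, Complex.add_re,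
      Complex.add_im, Complex.ofReal_re, Complex.ofReal_im, hp, hq, hr, hs]
    ring
  rw [hz, hx]
  have key : (2 * (p * r + q * s)) ^ 2 + (p ^ 2 + q ^ 2 - r ^ 2 - s ^ 2) ^ 2 ≤ 1 := by
    nlinarith [sq_nonneg (p * s - q * r), hnorm]
  nlinarith [mul_nonneg (sq_nonneg nx) (by linarith : (0:ℝ) ≤ 1 - ((2 * (p * r + q * s)) ^ 2 + (p ^ 2 + q ^ 2 - r ^ 2 - s ^ 2) ^ 2)), hn, sq_nonneg nx]
end

section
/- Let c and u be real numbers with 0 ≤ c, 0 ≤ u ≤ 1 and c² + (1−u)² = 1. Then 2 + 2(c − u) ≤ 2√2, with equality when c = 1 − u = 1/√2. -/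
/-- Tsirelson bound from the uncertainty relation: if `c ≥ 0`, `0 ≤ u ≤ 1` and
`c² + (1−u)² = 1`, then the CHSH value `2 + 2(c − u)` is at most `2√2`, with
equality when `c = 1 − u = 1/√2`. -/
theorem tsirelson_from_pur (c u : ℝ) (hc : 0 ≤ c) (hu0 : 0 ≤ u) (hu1 : u ≤ 1)
    (hpur : c ^ 2 + (1 - u) ^ 2 = 1) :
    2 + 2 * (c - u) ≤ 2 * Real.sqrt 2 ∧
      ((c = 1 / Real.sqrt 2 ∧ 1 - u = 1 / Real.sqrt 2) →
        2 + 2 * (c - u) = 2 * Real.sqrt 2) := by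
  have hs : Real.sqrt 2 ^ 2 = 2 := Real.sq_sqrt (by norm_num)
  have hspos : (0:ℝ) < Real.sqrt 2 := Real.sqrt_pos.mpr (by norm_num)
  constructor
  · nlinarith [sq_nonneg (c - (1 - u)), sq_nonneg (c + (1 - u) - Real.sqrt 2)]
  · rintro ⟨h1, h2⟩
    have : c + (1 - u) = Real.sqrt 2 := by
      rw [h1, h2]
      field_simp
      nlinarith
    linarith
end

section
/- Let t be a real number with 0 ≤ t ≤ 1/2, and let a, b, c, d ∈ [t, 1−t]. Then the convex hull of the four points (a,0), (1,b), (c,1), (0,d) in ℝ² contains the square [(1−t)/2, (1+t)/2] × [(1−t)/2, (1+t)/2]. -/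
private lemma neg_mul_neg' {x y : ℝ} (hx : x ≤ 0) (hy : y ≤ 0) : 0 ≤ x * y := by nlinarith

private lemma combo3 {K : Set (ℝ × ℝ)} (hK : Convex ℝ K) {x y z : ℝ × ℝ}
    (hx : x ∈ K) (hy : y ∈ K) (hz : z ∈ K) {a b c : ℝ}
    (ha : 0 ≤ a) (hb : 0 ≤ b) (hc : 0 ≤ c) (habc : a + b + c = 1) :
    a • x + b • y + c • z ∈ K := by
  by_cases hab : a + b = 0
  · have ha0 : a = 0 := by linarith
    have hb0 : b = 0 := by linarith
    have hc1 : c = 1 := by linarith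
    simpa [ha0, hb0, hc1] using hz
  · have hab' : 0 < a + b := lt_of_le_of_ne (add_nonneg ha hb) (Ne.symm hab)
    have hm : (a / (a + b)) • x + (b / (a + b)) • y ∈ K :=
      hK hx hy (div_nonneg ha hab'.le) (div_nonneg hb hab'.le) (by field_simp)
    have h2 := hK hm hz hab'.le hc (by linarith)
    have : (a + b) • ((a / (a + b)) • x + (b / (a + b)) • y) + c • z
        = a • x + b • y + c • z := by
      match_scalars <;> field_simp
    rwa [this] at h2

private lemma corner_mem {K : Set (ℝ × ℝ)} (hK : Convex ℝ K) {X Y u v w₁ w₂ : ℝ}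
    (h1 : (u, Y) ∈ K) (h2 : (X, v) ∈ K) (h3 : (w₁, w₂) ∈ K)
    (hpr : 0 ≤ (X - u) * (w₁ - X)) (hqs : 0 ≤ (Y - v) * (w₂ - Y)) :
    (X, Y) ∈ K := by
  by_cases hu : u = X
  · subst hu; exact h1
  by_cases hv : v = Y
  · subst hv; exact h2
  -- signs
  have hp : (X - u) ≠ 0 := fun h => hu (by linarith)
  have hq : (Y - v) ≠ 0 := fun h => hv (by linarith)
  -- absolute values
  set p := |X - u| with hPdef
  set q := |Y - v| with hQdef
  set r := |w₁ - X| with hRdef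
  set s := |w₂ - Y| with hSdef
  have hp0 : 0 < p := abs_pos.mpr hp
  have hq0 : 0 < q := abs_pos.mpr hq
  have hr0 : 0 ≤ r := abs_nonneg _
  have hs0 : 0 ≤ s := abs_nonneg _
  set T := r * q + p * s + p * q with hTdef
  have hT : 0 < T := by nlinarith [mul_pos hp0 hq0, mul_nonneg hr0 hq0.le, mul_nonneg hp0.le hs0]
  -- key sign identities
  have e1 : p * (w₁ - X) = (X - u) * r := by
    rcases lt_or_gt_of_ne hp with h | h
    · have hw : w₁ - X ≤ 0 := by nlinarith [hpr]
      rw [hPdef, hRdef, abs_of_neg (by linarith : X - u < 0), abs_of_nonpos hw]; ring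
    · have hw : 0 ≤ w₁ - X := by nlinarith [hpr]
      rw [hPdef, hRdef, abs_of_pos h, abs_of_nonneg hw]
  have e2 : q * (w₂ - Y) = (Y - v) * s := by
    rcases lt_or_gt_of_ne hq with h | h
    · have hw : w₂ - Y ≤ 0 := by nlinarith [hqs]
      rw [hQdef, hSdef, abs_of_neg (by linarith : Y - v < 0), abs_of_nonpos hw]; ring
    · have hw : 0 ≤ w₂ - Y := by nlinarith [hqs]
      rw [hQdef, hSdef, abs_of_pos h, abs_of_nonneg hw]
  have hmem := combo3 hK h1 h2 h3
    (a := r * q / T) (b := p * s / T) (c := p * q / T)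
    (div_nonneg (mul_nonneg hr0 hq0.le) hT.le)
    (div_nonneg (mul_nonneg hp0.le hs0) hT.le)
    (div_nonneg (mul_nonneg hp0.le hq0.le) hT.le)
    (by field_simp; linear_combination -hTdef)
  have heq : (r * q / T) • ((u, Y) : ℝ × ℝ) + (p * s / T) • (X, v) + (p * q / T) • (w₁, w₂)
      = (X, Y) := by
    have hx : r * q * u + p * s * X + p * q * w₁ = X * T := by
      rw [hTdef]; linear_combination q * e1
    have hy : r * q * Y + p * s * v + p * q * w₂ = Y * T := by
      rw [hTdef]; linear_combination p * e2
    refine Prod.ext ?_ ?_ <;> simp [Prod.smul_def] <;> field_simp <;> linarith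
  rwa [heq] at hmem

/-- Let `0 ≤ t ≤ 1/2` and `a, b, c, d ∈ [t, 1−t]`.  The convex hull of the four
points `(a,0), (1,b), (c,1), (0,d)` (one on each edge of the unit square) contains
the axis-aligned square `[(1−t)/2, (1+t)/2]²` of side `t` centered at `(1/2,1/2)`. -/
theorem square_subset_convexHull_edge_points (t a b c d : ℝ)
    (ht0 : 0 ≤ t) (ht1 : t ≤ 1 / 2)
    (ha : a ∈ Set.Icc t (1 - t)) (hb : b ∈ Set.Icc t (1 - t))
    (hc : c ∈ Set.Icc t (1 - t)) (hd : d ∈ Set.Icc t (1 - t)) :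
    Set.Icc ((1 - t) / 2) ((1 + t) / 2) ×ˢ Set.Icc ((1 - t) / 2) ((1 + t) / 2) ⊆
      convexHull ℝ ({(a, 0), (1, b), (c, 1), (0, d)} : Set (ℝ × ℝ)) := by
  rintro ⟨X, Y⟩ ⟨⟨hX1, hX2⟩, ⟨hY1, hY2⟩⟩
  obtain ⟨ha1, ha2⟩ := ha; obtain ⟨hb1, hb2⟩ := hb
  obtain ⟨hc1, hc2⟩ := hc; obtain ⟨hd1, hd2⟩ := hd
  set K := convexHull ℝ ({(a, 0), (1, b), (c, 1), (0, d)} : Set (ℝ × ℝ)) with hKdef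
  have hK : Convex ℝ K := convex_convexHull ℝ _
  have hP1 : ((a, 0) : ℝ × ℝ) ∈ K := subset_convexHull ℝ _ (by simp)
  have hP2 : ((1, b) : ℝ × ℝ) ∈ K := subset_convexHull ℝ _ (by simp)
  have hP3 : ((c, 1) : ℝ × ℝ) ∈ K := subset_convexHull ℝ _ (by simp)
  have hP4 : ((0, d) : ℝ × ℝ) ∈ K := subset_convexHull ℝ _ (by simp)
  have hY0 : 0 ≤ Y := by linarith
  have hY1' : Y ≤ 1 := by linarith
  have hX0 : 0 ≤ X := by linarith
  have hX1' : X ≤ 1 := by linarith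
  -- point on the diagonal (a,0)-(c,1) at height Y
  have hQv : (((1 - Y) * a + Y * c, Y) : ℝ × ℝ) ∈ K := by
    have := hK hP1 hP3 (by linarith : (0:ℝ) ≤ 1 - Y) hY0 (by ring)
    convert this using 1
    simp [Prod.ext_iff]
  -- point on the diagonal (0,d)-(1,b) at abscissa X
  have hQh : ((X, X * b + (1 - X) * d) : ℝ × ℝ) ∈ K := by
    have := hK hP2 hP4 hX0 (by linarith : (0:ℝ) ≤ 1 - X) (by ring)
    convert this using 1
    simp [Prod.ext_iff]
  -- midpoints of adjacent vertex pairs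
  have hM12 : (((a + 1) / 2, b / 2) : ℝ × ℝ) ∈ K := by
    have := hK hP1 hP2 (by norm_num : (0:ℝ) ≤ 1/2) (by norm_num : (0:ℝ) ≤ 1/2) (by norm_num)
    convert this using 1
    simp [Prod.ext_iff]
    constructor <;> ring
  have hM23 : (((1 + c) / 2, (b + 1) / 2) : ℝ × ℝ) ∈ K := by
    have := hK hP2 hP3 (by norm_num : (0:ℝ) ≤ 1/2) (by norm_num : (0:ℝ) ≤ 1/2) (by norm_num)
    convert this using 1
    simp [Prod.ext_iff]
    constructor <;> ring
  have hM34 : ((c / 2, (1 + d) / 2) : ℝ × ℝ) ∈ K := by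
    have := hK hP3 hP4 (by norm_num : (0:ℝ) ≤ 1/2) (by norm_num : (0:ℝ) ≤ 1/2) (by norm_num)
    convert this using 1
    simp [Prod.ext_iff]
    constructor <;> ring
  have hM41 : ((a / 2, d / 2) : ℝ × ℝ) ∈ K := by
    have := hK hP4 hP1 (by norm_num : (0:ℝ) ≤ 1/2) (by norm_num : (0:ℝ) ≤ 1/2) (by norm_num)
    convert this using 1
    simp [Prod.ext_iff]
    constructor <;> ring
  set u := (1 - Y) * a + Y * c with hu
  set v := X * b + (1 - X) * d with hv
  have hut : t ≤ u := by nlinarith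
  have hut' : u ≤ 1 - t := by nlinarith
  have hvt : t ≤ v := by nlinarith
  have hvt' : v ≤ 1 - t := by nlinarith
  rcases le_total u X with h | h <;> rcases le_total v Y with h' | h'
  · -- u ≤ X, v ≤ Y : use upper-right midpoint M23
    exact corner_mem hK hQv hQh hM23
      (mul_nonneg (by linarith) (by linarith)) (mul_nonneg (by linarith) (by linarith))
  · -- u ≤ X, Y ≤ v : use lower-right midpoint M12
    exact corner_mem hK hQv hQh hM12
      (mul_nonneg (by linarith) (by linarith))
      (neg_mul_neg' (by linarith) (by linarith))
  · -- X ≤ u, v ≤ Y : use upper-left midpoint M34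
    exact corner_mem hK hQv hQh hM34
      (neg_mul_neg' (by linarith) (by linarith))
      (mul_nonneg (by linarith) (by linarith))
  · -- X ≤ u, Y ≤ v : use lower-left midpoint M41
    exact corner_mem hK hQv hQh hM41
      (neg_mul_neg' (by linarith) (by linarith))
      (neg_mul_neg' (by linarith) (by linarith))
end

section
/- Let K ⊆ [0,1]² be a nonempty compact convex set that intersects each of the four closed edges of the unit square. Define the rescaling complementarity C_r(K) = sup{ r ≥ 0 : there exists x ∈ ℝ² with x + [0,r]² ⊆ K } and the uncertainty U(K) = min over (p,q) ∈ K of min over corners c ∈ {0,1}² of (1/2)·(|p − c₁| + |q − c₂|). Then 2·C_r(K) ≥ U(K). -/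
lemma pur_key (u x y γ d e : ℝ) (hu : 0 ≤ u) (hx1 : 2*u ≤ x) (hx2 : x ≤ 1 - 2*u)
    (hy1 : 2*u ≤ y) (hy2 : y ≤ 1 - 2*u) (hg1 : 2*u ≤ x + γ) (hg2 : x + γ ≤ 1 - 2*u)
    (hd : |d| ≤ 1) (he : |e| ≤ 1) : 0 ≤ x + y*γ + u*(d - e*γ) := by
  obtain ⟨hd1, hd2⟩ := abs_le.mp hd
  obtain ⟨he1, he2⟩ := abs_le.mp he
  rcases le_or_gt 0 γ with hγ | hγ
  · nlinarith [mul_nonneg hu hγ, mul_nonneg (mul_nonneg hu hγ) (by linarith : (0:ℝ) ≤ 1 - e),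
      mul_nonneg (by linarith : (0:ℝ) ≤ y) hγ,
      mul_nonneg hu (by linarith : (0:ℝ) ≤ 1 - γ),
      mul_nonneg hu (by linarith : (0:ℝ) ≤ 1 + d)]
  · nlinarith [mul_nonneg (by linarith : (0:ℝ) ≤ 1 - 2*u - y) (by linarith : (0:ℝ) ≤ -γ),
      mul_nonneg hu (by linarith : (0:ℝ) ≤ -γ),
      mul_nonneg (mul_nonneg hu (by linarith : (0:ℝ) ≤ 1 + e)) (by linarith : (0:ℝ) ≤ -γ),
      mul_nonneg hu (by linarith : (0:ℝ) ≤ 1 + d)]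

lemma pur_key' (u x y γ d e : ℝ) (hu : 0 ≤ u) (hx1 : 2*u ≤ x) (hx2 : x ≤ 1 - 2*u)
    (hy1 : 2*u ≤ y) (hy2 : y ≤ 1 - 2*u) (hg1 : 2*u ≤ x + γ) (hg2 : x + γ ≤ 1 - 2*u)
    (hd : |d| ≤ 1) (he : |e| ≤ 1) : x + y*γ + u*(d - e*γ) ≤ 1 := by
  have h := pur_key u (1-x) y (-γ) (-d) e hu (by linarith) (by linarith) hy1 hy2
    (by linarith) (by linarith) (by rwa [abs_neg]) he
  nlinarith [h]

set_option maxHeartbeats 1600000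

/-- Reverse preparation uncertainty relation for two sharp binary observables.
Let `K ⊆ [0,1]²` be a nonempty compact convex statistics set touching all four
edges of the unit square.  With the rescaling complementarity
`C_r(K) = sup{r ≥ 0 : some translate of [0,r]² fits inside K}` and the uncertainty
`U(K) = inf over points of K and corners of half the ℓ¹-distance to the corner`,
one has `2·C_r(K) ≥ U(K)`. -/
theorem reverse_pur_rescaling (K : Set (ℝ × ℝ))
    (hK : K ⊆ Set.Icc (0 : ℝ) 1 ×ˢ Set.Icc (0 : ℝ) 1)
    (hne : K.Nonempty) (hcomp : IsCompact K) (hconv : Convex ℝ K)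
    (hbot : ∃ z ∈ K, z.2 = 0) (htop : ∃ z ∈ K, z.2 = 1)
    (hleft : ∃ z ∈ K, z.1 = 0) (hright : ∃ z ∈ K, z.1 = 1) :
    2 * sSup {r : ℝ | 0 ≤ r ∧ ∃ x : ℝ × ℝ,
        Set.Icc x.1 (x.1 + r) ×ˢ Set.Icc x.2 (x.2 + r) ⊆ K} ≥
      sInf {v : ℝ | ∃ z ∈ K, ∃ c₁ ∈ ({0, 1} : Set ℝ), ∃ c₂ ∈ ({0, 1} : Set ℝ),
        v = (|z.1 - c₁| + |z.2 - c₂|) / 2} := by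
  set S := {r : ℝ | 0 ≤ r ∧ ∃ x : ℝ × ℝ,
      Set.Icc x.1 (x.1 + r) ×ˢ Set.Icc x.2 (x.2 + r) ⊆ K} with hS
  set T := {v : ℝ | ∃ z ∈ K, ∃ c₁ ∈ ({0, 1} : Set ℝ), ∃ c₂ ∈ ({0, 1} : Set ℝ),
      v = (|z.1 - c₁| + |z.2 - c₂|) / 2} with hT
  -- S is bounded above by 1
  have hbddS : BddAbove S := by
    refine ⟨1, ?_⟩
    rintro ρ ⟨hρ0, x, hx⟩
    have h1 : (x.1, x.2) ∈ Set.Icc x.1 (x.1 + ρ) ×ˢ Set.Icc x.2 (x.2 + ρ) := by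
      constructor <;> constructor <;> simp <;> linarith
    have h2 : (x.1 + ρ, x.2) ∈ Set.Icc x.1 (x.1 + ρ) ×ˢ Set.Icc x.2 (x.2 + ρ) := by
      constructor <;> constructor <;> simp <;> linarith
    have k1 := hK (hx h1)
    have k2 := hK (hx h2)
    simp only [Set.mem_prod, Set.mem_Icc] at k1 k2
    linarith [k1.1.1, k2.1.2]
  have hbddT : BddBelow T := by
    refine ⟨0, ?_⟩
    rintro v ⟨z, hz, c₁, hc₁, c₂, hc₂, rfl⟩
    positivity
  -- 0 ∈ S
  have h0S : (0:ℝ) ∈ S := by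
    obtain ⟨z, hz⟩ := hne
    refine ⟨le_refl 0, z, ?_⟩
    rintro ⟨p, q⟩ ⟨hp, hq⟩
    simp only [add_zero, Set.mem_Icc] at hp hq
    have : (p, q) = z := by
      ext <;> simp <;> [exact le_antisymm hp.2 hp.1; exact le_antisymm hq.2 hq.1]
    rwa [this]
  set u := sInf T with hu_def
  rcases le_or_gt u 0 with hu | hu
  · have : (0:ℝ) ≤ sSup S := le_csSup hbddS h0S
    simp only [ge_iff_le]
    linarith
  -- Main case: u > 0
  have memT : ∀ z ∈ K, ∀ c₁ ∈ ({0,1} : Set ℝ), ∀ c₂ ∈ ({0,1} : Set ℝ),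
      u ≤ (|z.1 - c₁| + |z.2 - c₂|) / 2 := by
    intro z hz c₁ h1 c₂ h2
    exact csInf_le hbddT ⟨z, hz, c₁, h1, c₂, h2, rfl⟩
  have mem0 : (0:ℝ) ∈ ({0,1} : Set ℝ) := by simp
  have mem1 : (1:ℝ) ∈ ({0,1} : Set ℝ) := by simp
  obtain ⟨a, ha, ha2⟩ := hbot
  obtain ⟨b, hb, hb2⟩ := htop
  obtain ⟨l, hl, hl1⟩ := hleft
  obtain ⟨r, hr, hr1⟩ := hright
  have hKa := hK ha; have hKb := hK hb; have hKl := hK hl; have hKr := hK hr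
  simp only [Set.mem_prod, Set.mem_Icc] at hKa hKb hKl hKr
  -- coordinate bounds
  have haL : 2*u ≤ a.1 := by
    have := memT a ha 0 mem0 0 mem0
    rw [ha2] at this
    rw [abs_of_nonneg (by linarith [hKa.1.1] : (0:ℝ) ≤ a.1 - 0)] at this
    simp at this; linarith
  have haR : a.1 ≤ 1 - 2*u := by
    have := memT a ha 1 mem1 0 mem0
    rw [ha2] at this
    rw [abs_of_nonpos (by linarith [hKa.1.2] : a.1 - 1 ≤ (0:ℝ))] at this
    simp at this; linarith
  have hbL : 2*u ≤ b.1 := by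
    have := memT b hb 0 mem0 1 mem1
    rw [hb2] at this
    rw [abs_of_nonneg (by linarith [hKb.1.1] : (0:ℝ) ≤ b.1 - 0)] at this
    simp at this; linarith
  have hbR : b.1 ≤ 1 - 2*u := by
    have := memT b hb 1 mem1 1 mem1
    rw [hb2] at this
    rw [abs_of_nonpos (by linarith [hKb.1.2] : b.1 - 1 ≤ (0:ℝ))] at this
    simp at this; linarith
  have hlL : 2*u ≤ l.2 := by
    have := memT l hl 0 mem0 0 mem0
    rw [hl1] at this
    rw [abs_of_nonneg (by linarith [hKl.2.1] : (0:ℝ) ≤ l.2 - 0)] at this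
    simp at this; linarith
  have hlR : l.2 ≤ 1 - 2*u := by
    have := memT l hl 0 mem0 1 mem1
    rw [hl1] at this
    rw [abs_of_nonpos (by linarith [hKl.2.2] : l.2 - 1 ≤ (0:ℝ))] at this
    simp at this; linarith
  have hrL : 2*u ≤ r.2 := by
    have := memT r hr 1 mem1 0 mem0
    rw [hr1] at this
    rw [abs_of_nonneg (by linarith [hKr.2.1] : (0:ℝ) ≤ r.2 - 0)] at this
    simp at this; linarith
  have hrR : r.2 ≤ 1 - 2*u := by
    have := memT r hr 1 mem1 1 mem1
    rw [hr1] at this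
    rw [abs_of_nonpos (by linarith [hKr.2.2] : r.2 - 1 ≤ (0:ℝ))] at this
    simp at this; linarith
  set α := b.1 - a.1 with hα_def
  set β := r.2 - l.2 with hβ_def
  have hu4 : 4*u ≤ 1 := by linarith
  have hαabs : |α| ≤ 1 - 4*u := abs_le.mpr ⟨by linarith, by linarith⟩
  have hβabs : |β| ≤ 1 - 4*u := abs_le.mpr ⟨by linarith, by linarith⟩
  have hαβ : α * β ≤ (1-4*u)*(1-4*u) := by
    calc α * β ≤ |α * β| := le_abs_self _
    _ = |α| * |β| := abs_mul α β
    _ ≤ (1-4*u)*(1-4*u) :=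
        mul_le_mul hαabs hβabs (abs_nonneg β) (by linarith)
  have hD : 0 < 1 - α * β := by nlinarith [mul_pos hu (by linarith : (0:ℝ) < 1 - 2*u)]
  set D := 1 - α * β with hD_def
  set sc := (a.1 + l.2 * α) / D with hsc_def
  set tc := (l.2 + a.1 * β) / D with htc_def
  -- every point of the square of side u centered at (sc, tc) is in K
  have corner : ∀ d e : ℝ, |d| ≤ 1 → |e| ≤ 1 →
      (sc + d * (u/2), tc + e * (u/2)) ∈ K := by
    intro d e hd he
    set t := (l.2 + a.1 * β + u * (e - d * β)) / D with ht_def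
    set s := (a.1 + l.2 * α + u * (d - e * α)) / D with hs_def
    have ht0 : 0 ≤ t := by
      apply div_nonneg _ hD.le
      exact pur_key u l.2 a.1 β e d hu.le hlL hlR haL haR (by simp [hβ_def]; linarith)
        (by simp [hβ_def]; linarith) he hd
    have ht1 : t ≤ 1 := by
      rw [div_le_one hD]
      have := pur_key' u l.2 b.1 β e d hu.le hlL hlR hbL hbR (by simp [hβ_def]; linarith)
        (by simp [hβ_def]; linarith) he hd
      simp only [hD_def, hα_def]
      nlinarith [this]
    have hs0 : 0 ≤ s := by
      apply div_nonneg _ hD.le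
      exact pur_key u a.1 l.2 α d e hu.le haL haR hlL hlR (by simp [hα_def]; linarith)
        (by simp [hα_def]; linarith) hd he
    have hs1 : s ≤ 1 := by
      rw [div_le_one hD]
      have := pur_key' u a.1 r.2 α d e hu.le haL haR hrL hrR (by simp [hα_def]; linarith)
        (by simp [hα_def]; linarith) hd he
      simp only [hD_def, hβ_def]
      nlinarith [this]
    have hX : (1 - t) • a + t • b ∈ K := hconv ha hb (by linarith) ht0 (by ring)
    have hY : (1 - s) • l + s • r ∈ K := hconv hl hr (by linarith) hs0 (by ring)
    have hP : (sc + d * (u/2), tc + e * (u/2)) =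
        (1/2 : ℝ) • ((1 - t) • a + t • b) + (1/2 : ℝ) • ((1 - s) • l + s • r) := by
      have e1 : ((1/2 : ℝ) • ((1 - t) • a + t • b) + (1/2 : ℝ) • ((1 - s) • l + s • r)).1
          = ((1-t)*a.1 + t*b.1 + (1-s)*l.1 + s*r.1)/2 := by
        simp [Prod.smul_def, Prod.add_def]; ring
      have e2 : ((1/2 : ℝ) • ((1 - t) • a + t • b) + (1/2 : ℝ) • ((1 - s) • l + s • r)).2
          = ((1-t)*a.2 + t*b.2 + (1-s)*l.2 + s*r.2)/2 := by
        simp [Prod.smul_def, Prod.add_def]; ring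
      have hDne : D ≠ 0 := ne_of_gt hD
      apply Prod.ext
      · rw [e1, hl1, hr1, hsc_def, ht_def, hs_def]
        have hb1 : b.1 = a.1 + α := by rw [hα_def]; ring
        rw [hb1]
        field_simp
        ring
      · rw [e2, ha2, hb2, htc_def, ht_def, hs_def]
        have hr2 : r.2 = l.2 + β := by rw [hβ_def]; ring
        rw [hr2]
        field_simp
        ring
    rw [hP]
    exact hconv hX hY (by norm_num) (by norm_num) (by norm_num)
  -- the square of side u fits inside K
  have huS : u ∈ S := by
    refine ⟨hu.le, (sc - u/2, tc - u/2), ?_⟩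
    rintro ⟨p, q⟩ ⟨hp, hq⟩
    simp only [Set.mem_Icc] at hp hq
    have hu2 : (0:ℝ) < u/2 := by linarith
    set d := (p - sc) / (u/2) with hd_def
    set e := (q - tc) / (u/2) with he_def
    have hd : |d| ≤ 1 := by
      rw [abs_le, hd_def]
      constructor
      · rw [le_div_iff₀ hu2]; simp at hp ⊢; linarith [hp.1]
      · rw [div_le_one hu2]; simp at hp ⊢; linarith [hp.2]
    have he : |e| ≤ 1 := by
      rw [abs_le, he_def]
      constructor
      · rw [le_div_iff₀ hu2]; simp at hq ⊢; linarith [hq.1]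
      · rw [div_le_one hu2]; simp at hq ⊢; linarith [hq.2]
    have hpq : (p, q) = (sc + d * (u/2), tc + e * (u/2)) := by
      have : d * (u/2) = p - sc := div_mul_cancel₀ _ (ne_of_gt hu2)
      have : e * (u/2) = q - tc := div_mul_cancel₀ _ (ne_of_gt hu2)
      apply Prod.ext <;> simp [hd_def, he_def] <;>
        field_simp <;> ring
    rw [hpq]
    exact corner d e hd he
  have : u ≤ sSup S := le_csSup hbddS huS
  simp only [ge_iff_le]
  linarith
end
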